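/- Define a : ℕ → ℚ by a_0 = 1 and, for n ≥ 1, a_n = -(2/(n+1))·(2^{n+1} - 1)·B_{n+1}, where B_m denotes the m-th Bernoulli number. Then for every n ≥ 1, \sum_{k=0}^n \binom{n}{k} a_k = -a_n. (Thus the sequence [1, -1/2, 0, 1/4, 0, -1/2, 0, 17/8, ...], whose exponential generating function is 2/(1+e^x), is sent by the binomial transform to [a_0, -a_1, -a_2, ...].) -/

import Mathlib

open PowerSeries Finset

lemma two_eq_C : (2 : PowerSeries ℚ) = PowerSeries.C (2 : ℚ) := (map_ofNat (C (R := ℚ)) 2).symm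

/-- The exponential generating function of `a` satisfies `A * (e^x + 1) = 2`. -/
lemma egf_mul_exp_add_one (a : ℕ → ℚ) (h0 : a 0 = 1)
    (ha : ∀ n : ℕ, 1 ≤ n →
      a n = -(2 / ((n : ℚ) + 1)) * (2 ^ (n + 1) - 1) * bernoulli (n + 1)) :
    PowerSeries.mk (fun n => a n / n.factorial) * (PowerSeries.exp ℚ + 1) = 2 := by
  set B : PowerSeries ℚ := bernoulliPowerSeries ℚ with hB
  set E : PowerSeries ℚ := PowerSeries.exp ℚ with hE
  set A : PowerSeries ℚ := PowerSeries.mk (fun n => a n / n.factorial) with hA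
  have h1 : B * (E - 1) = X := bernoulliPowerSeries_mul_exp_sub_one ℚ
  have h2 : rescale (2 : ℚ) B * (E ^ 2 - 1) = 2 * X := by
    have := congrArg (rescale (2 : ℚ)) h1
    rw [map_mul, map_sub, map_one, rescale_X] at this
    have hre : rescale (2 : ℚ) E = E ^ 2 := by
      rw [hE, exp_pow_eq_rescale_exp]
      norm_num
    rw [hre] at this
    rw [this, ← two_eq_C]
  have coeffB : ∀ m : ℕ, (coeff m) B = bernoulli m / m.factorial := by
    intro m
    simp [hB, bernoulliPowerSeries, Algebra.algebraMap_self_apply]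
  have h3 : X * A = 2 * B - 2 * rescale (2 : ℚ) B := by
    ext n
    rw [map_sub, two_eq_C, PowerSeries.coeff_C_mul, PowerSeries.coeff_C_mul,
      coeff_rescale, coeffB]
    cases n with
    | zero => simp
    | succ n =>
      rw [PowerSeries.coeff_succ_X_mul, hA, coeff_mk]
      have hfac : ((n + 1).factorial : ℚ) = (n + 1) * n.factorial := by
        rw [Nat.factorial_succ]; push_cast; ring
      have hfne : (n.factorial : ℚ) ≠ 0 := Nat.cast_ne_zero.mpr n.factorial_ne_zero
      have hnne : ((n : ℚ) + 1) ≠ 0 := by positivity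
      rcases Nat.eq_zero_or_pos n with rfl | hn
      · norm_num [h0, bernoulli_one]
      · rw [ha n hn, hfac]
        field_simp
        ring
  have hEne : E - 1 ≠ 0 := by
    intro h
    have := congrArg (coeff 1) h
    simp [hE, PowerSeries.coeff_exp] at this
  have hXEne : X * (E - 1) ≠ 0 := mul_ne_zero PowerSeries.X_ne_zero hEne
  have key : A * (E + 1) * (X * (E - 1)) = 2 * (X * (E - 1)) := by
    linear_combination (E ^ 2 - 1) * h3 + 2 * (E + 1) * h1 - 2 * h2
  exact mul_right_cancel₀ hXEne key

theorem binomial_transform_eigen_N (a : ℕ → ℚ) (h0 : a 0 = 1)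
    (ha : ∀ n : ℕ, 1 ≤ n →
      a n = -(2 / ((n : ℚ) + 1)) * (2 ^ (n + 1) - 1) * bernoulli (n + 1)) :
    ∀ n : ℕ, 1 ≤ n → ∑ k ∈ Finset.range (n + 1), (n.choose k : ℚ) * a k = -a n := by
  intro n hn
  have key := egf_mul_exp_add_one a h0 ha
  set A : PowerSeries ℚ := PowerSeries.mk (fun n => a n / n.factorial) with hA
  have hAE : A * PowerSeries.exp ℚ = 2 - A := by linear_combination key
  have hcoeff := congrArg (coeff n) hAE
  rw [PowerSeries.coeff_mul, Finset.Nat.sum_antidiagonal_eq_sum_range_succ_mk] at hcoeff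
  have hn0 : n ≠ 0 := Nat.one_le_iff_ne_zero.mp hn
  have hrhs : (coeff n) (2 - A) = -(a n / n.factorial) := by
    rw [map_sub, hA, coeff_mk, two_eq_C, PowerSeries.coeff_C, if_neg hn0]
    ring
  rw [hrhs] at hcoeff
  simp only [hA, coeff_mk, PowerSeries.coeff_exp, Algebra.algebraMap_self_apply] at hcoeff
  have hterm : ∀ k ∈ Finset.range (n + 1),
      (n.choose k : ℚ) * a k = (n.factorial : ℚ) * (a k / k.factorial * (1 / (n-k).factorial)) := by
    intro k hk
    have hkn : k ≤ n := Nat.lt_succ_iff.mp (Finset.mem_range.mp hk)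
    rw [Nat.cast_choose ℚ hkn]
    have h1 : (k.factorial : ℚ) ≠ 0 := Nat.cast_ne_zero.mpr k.factorial_ne_zero
    have h2 : ((n-k).factorial : ℚ) ≠ 0 := Nat.cast_ne_zero.mpr (n - k).factorial_ne_zero
    field_simp
  rw [Finset.sum_congr rfl hterm, ← Finset.mul_sum]
  rw [show Finset.range (n + 1) = Finset.range n.succ from rfl, hcoeff]
  have hfne : (n.factorial : ℚ) ≠ 0 := Nat.cast_ne_zero.mpr n.factorial_ne_zero
  field_simp
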